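/- In the complete twisted graph T_{2n} (n ≥ 1), for each k ∈ {1,...,n}, the double star A_k is a plane spanning tree: no two of its edges cross. -/

import Mathlib

open SimpleGraph

/-- Two edges of the complete twisted graph cross: writing the edges as `{a,b}` and
`{c,d}` with `a < b` and `c < d` in the linear vertex order, they cross iff
`a < c < d < b` or `c < a < b < d`. -/
def Cross {m : ℕ} (e f : Sym2 (Fin m)) : Prop :=
  ∃ a b c d : Fin m, a < b ∧ c < d ∧ e = s(a, b) ∧ f = s(c, d) ∧
    ((a < c ∧ d < b) ∨ (c < a ∧ b < d))

/-- A subgraph of the twisted graph is plane if no two of its edges cross. -/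
def IsPlane {m : ℕ} (G : SimpleGraph (Fin m)) : Prop :=
  ∀ e ∈ G.edgeSet, ∀ f ∈ G.edgeSet, ¬ Cross e f

/-- A partition of the complete twisted graph `T_{2n}` into plane spanning trees:
`n` plane spanning trees such that every edge of the complete graph lies in
exactly one of them. -/
def IsTwistedPartition {n : ℕ} (S : Fin n → SimpleGraph (Fin (2 * n))) : Prop :=
  (∀ i, (S i).IsTree ∧ IsPlane (S i)) ∧
    ∀ u v : Fin (2 * n), u ≠ v → ∃! i, (S i).Adj u v

/-- The vertex `v_i` (1-indexed) of `T_{2n}`, i.e. vertex number `i - 1` in the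
linear order `v_1 < v_2 < ... < v_n < w_n < ... < w_1`. -/
def vv (n : ℕ) (hn : 0 < n) (i : ℕ) : Fin (2 * n) :=
  ⟨(i - 1) % (2 * n), Nat.mod_lt _ (by omega)⟩

/-- The vertex `w_i` (1-indexed) of `T_{2n}`, i.e. vertex number `2n - i` in the
linear order `v_1 < v_2 < ... < v_n < w_n < ... < w_1`. -/
def ww (n : ℕ) (hn : 0 < n) (i : ℕ) : Fin (2 * n) :=
  ⟨(2 * n - i) % (2 * n), Nat.mod_lt _ (by omega)⟩
/-- The spanning balanced double star `A_k` of `T_{2n}` with center edge `v_n w_n`,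
in which `v_n` is adjacent to `v_1, ..., v_{n-k}` and `w_n, w_{n-1}, ..., w_{n-k+1}`,
and `w_n` is adjacent to `w_1, ..., w_{n-k}` and `v_n, v_{n-1}, ..., v_{n-k+1}`. -/
def Ak (n : ℕ) (hn : 0 < n) (k : ℕ) : SimpleGraph (Fin (2 * n)) :=
  SimpleGraph.fromEdgeSet
    ({s(vv n hn n, ww n hn n)} ∪
      {e | ∃ j, 1 ≤ j ∧ j ≤ n - k ∧
        (e = s(vv n hn n, vv n hn j) ∨ e = s(ww n hn n, ww n hn j))} ∪
      {e | ∃ j, n - k + 1 ≤ j ∧ j ≤ n - 1 ∧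
        (e = s(vv n hn n, ww n hn j) ∨ e = s(ww n hn n, vv n hn j))})

/-- The spanning balanced double star `A'_i` of `T_{2n}` with center edge `v_i w_i`,
in which `v_i` is adjacent to `w_{i+1}, ..., w_n` and `v_1, ..., v_{i-1}`, and
`w_i` is adjacent to `v_{i+1}, ..., v_n` and `w_1, ..., w_{i-1}`. -/
def A' (n : ℕ) (hn : 0 < n) (i : ℕ) : SimpleGraph (Fin (2 * n)) :=
  SimpleGraph.fromEdgeSet
    ({s(vv n hn i, ww n hn i)} ∪
      {e | ∃ j, i + 1 ≤ j ∧ j ≤ n ∧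
        (e = s(vv n hn i, ww n hn j) ∨ e = s(ww n hn i, vv n hn j))} ∪
      {e | ∃ j, 1 ≤ j ∧ j ≤ i - 1 ∧
        (e = s(vv n hn i, vv n hn j) ∨ e = s(ww n hn i, ww n hn j))})


def Qp (n k a b : ℕ) : Prop :=
  (b = n - 1 ∧ a + k < n) ∨ (a = n - 1 ∧ b = n) ∨
  (a = n - 1 ∧ n < b ∧ b < n + k) ∨
  (b = n ∧ n ≤ a + k ∧ a + 1 < n) ∨ (a = n ∧ n + k ≤ b)

lemma vv_val {n : ℕ} (hn : 0 < n) (j : ℕ) (hj : j ≤ 2 * n) : (vv n hn j).val = j - 1 :=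
  Nat.mod_eq_of_lt (by omega)

lemma ww_val {n : ℕ} (hn : 0 < n) (j : ℕ) (h1 : 1 ≤ j) : (ww n hn j).val = 2 * n - j :=
  Nat.mod_eq_of_lt (by omega)

lemma ak_adj_iff (n : ℕ) (hn : 0 < n) (k : ℕ) (hk1 : 1 ≤ k) (hk2 : k ≤ n)
    (u v : Fin (2 * n)) :
    (Ak n hn k).Adj u v ↔ Qp n k u.val v.val ∨ Qp n k v.val u.val := by
  have Vn : (vv n hn n).val = n - 1 := vv_val hn n (by omega)
  have Wn : (ww n hn n).val = n := by rw [ww_val hn n hn]; omega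
  unfold Ak
  rw [fromEdgeSet_adj]
  constructor
  · rintro ⟨hmem, -⟩
    simp only [Set.mem_union, Set.mem_singleton_iff, Set.mem_setOf_eq] at hmem
    unfold Qp
    rcases hmem with ((h | ⟨j, hj1, hj2, h | h⟩) | ⟨j, hj1, hj2, h | h⟩) <;>
      rw [Sym2.eq_iff] at h <;>
      [skip;
       have Vj : (vv n hn j).val = j - 1 := vv_val hn j (by omega);
       have Wj : (ww n hn j).val = 2 * n - j := ww_val hn j (by omega);
       have Wj : (ww n hn j).val = 2 * n - j := ww_val hn j (by omega);
       have Vj : (vv n hn j).val = j - 1 := vv_val hn j (by omega)] <;>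
      rcases h with ⟨h1, h2⟩ | ⟨h1, h2⟩ <;>
      replace h1 := congrArg Fin.val h1 <;>
      replace h2 := congrArg Fin.val h2
    · exact Or.inl (Or.inr (Or.inl ⟨by omega, by omega⟩))
    · exact Or.inr (Or.inr (Or.inl ⟨by omega, by omega⟩))
    · exact Or.inr (Or.inl ⟨by omega, by omega⟩)
    · exact Or.inl (Or.inl ⟨by omega, by omega⟩)
    · exact Or.inl (Or.inr (Or.inr (Or.inr (Or.inr ⟨by omega, by omega⟩))))
    · exact Or.inr (Or.inr (Or.inr (Or.inr (Or.inr ⟨by omega, by omega⟩))))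
    · exact Or.inl (Or.inr (Or.inr (Or.inl ⟨by omega, by omega, by omega⟩)))
    · exact Or.inr (Or.inr (Or.inr (Or.inl ⟨by omega, by omega, by omega⟩)))
    · exact Or.inr (Or.inr (Or.inr (Or.inr (Or.inl ⟨by omega, by omega, by omega⟩))))
    · exact Or.inl (Or.inr (Or.inr (Or.inr (Or.inl ⟨by omega, by omega, by omega⟩))))
  · intro hq
    have hne : u ≠ v := by
      intro h; subst h; unfold Qp at hq; omega
    refine ⟨?_, hne⟩
    simp only [Set.mem_union, Set.mem_singleton_iff, Set.mem_setOf_eq]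
    suffices H : ∀ a b : Fin (2 * n), Qp n k a.val b.val →
        (s(a, b) = s(vv n hn n, ww n hn n) ∨
          ∃ j, 1 ≤ j ∧ j ≤ n - k ∧
            (s(a, b) = s(vv n hn n, vv n hn j) ∨ s(a, b) = s(ww n hn n, ww n hn j))) ∨
        ∃ j, n - k + 1 ≤ j ∧ j ≤ n - 1 ∧
          (s(a, b) = s(vv n hn n, ww n hn j) ∨ s(a, b) = s(ww n hn n, vv n hn j)) by
      rcases hq with hq | hq
      · exact H u v hq
      · rcases H v u hq with (h | ⟨j, h1, h2, h3 | h3⟩) | ⟨j, h1, h2, h3 | h3⟩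
        · exact Or.inl (Or.inl (Sym2.eq_swap.trans h))
        · exact Or.inl (Or.inr ⟨j, h1, h2, Or.inl (Sym2.eq_swap.trans h3)⟩)
        · exact Or.inl (Or.inr ⟨j, h1, h2, Or.inr (Sym2.eq_swap.trans h3)⟩)
        · exact Or.inr ⟨j, h1, h2, Or.inl (Sym2.eq_swap.trans h3)⟩
        · exact Or.inr ⟨j, h1, h2, Or.inr (Sym2.eq_swap.trans h3)⟩
    intro a b hq
    unfold Qp at hq
    rcases hq with ⟨hb, ha⟩ | ⟨ha, hb⟩ | ⟨ha, hb⟩ | ⟨hb, ha⟩ | ⟨ha, hb⟩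
    · refine Or.inl (Or.inr ⟨a.val + 1, by omega, by omega, Or.inl ?_⟩)
      rw [show vv n hn n = b from Fin.ext (by rw [Vn]; omega),
          show vv n hn (a.val + 1) = a from Fin.ext (by rw [vv_val hn _ (by omega)]; omega)]
      exact Sym2.eq_swap
    · refine Or.inl (Or.inl ?_)
      rw [show vv n hn n = a from Fin.ext (by rw [Vn]; omega),
          show ww n hn n = b from Fin.ext (by rw [Wn]; omega)]
    · refine Or.inr ⟨2 * n - b.val, by omega, by omega, Or.inl ?_⟩
      rw [show vv n hn n = a from Fin.ext (by rw [Vn]; omega),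
          show ww n hn (2 * n - b.val) = b from Fin.ext (by rw [ww_val hn _ (by omega)]; omega)]
    · refine Or.inr ⟨a.val + 1, by omega, by omega, Or.inr ?_⟩
      rw [show ww n hn n = b from Fin.ext (by rw [Wn]; omega),
          show vv n hn (a.val + 1) = a from Fin.ext (by rw [vv_val hn _ (by omega)]; omega)]
      exact Sym2.eq_swap
    · refine Or.inl (Or.inr ⟨2 * n - b.val, by omega, by omega, Or.inr ?_⟩)
      rw [show ww n hn n = a from Fin.ext (by rw [Wn]; omega),
          show ww n hn (2 * n - b.val) = b from Fin.ext (by rw [ww_val hn _ (by omega)]; omega)]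

lemma ak_plane (n : ℕ) (hn : 0 < n) (k : ℕ) (hk1 : 1 ≤ k) (hk2 : k ≤ n) :
    IsPlane (Ak n hn k) := by
  intro e he f hf hcross
  unfold Cross at hcross
  obtain ⟨a, b, c, d, hab, hcd, rfl, rfl, hx⟩ := hcross
  rw [SimpleGraph.mem_edgeSet, ak_adj_iff n hn k hk1 hk2] at he hf
  unfold Qp at he hf
  rw [Fin.lt_def] at hab hcd
  rcases hx with ⟨h1, h2⟩ | ⟨h1, h2⟩ <;> rw [Fin.lt_def] at h1 h2 <;> omega

lemma ak_unique_nbr (n : ℕ) (hn : 0 < n) (k : ℕ) (hk1 : 1 ≤ k) (hk2 : k ≤ n)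
    (x u w : Fin (2 * n)) (hx1 : x.val ≠ n - 1) (hx2 : x.val ≠ n)
    (h1 : (Ak n hn k).Adj x u) (h2 : (Ak n hn k).Adj x w) : u = w := by
  rw [ak_adj_iff n hn k hk1 hk2] at h1 h2
  unfold Qp at h1 h2
  exact Fin.ext (by omega)

lemma ak_connected (n : ℕ) (hn : 0 < n) (k : ℕ) (hk1 : 1 ≤ k) (hk2 : k ≤ n) :
    (Ak n hn k).Connected := by
  set N : Fin (2 * n) := ⟨n - 1, by omega⟩ with hNdef
  set M : Fin (2 * n) := ⟨n, by omega⟩ with hMdef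
  have hN : N.val = n - 1 := rfl
  have hM : M.val = n := rfl
  have hMN : (Ak n hn k).Adj M N := by
    rw [ak_adj_iff n hn k hk1 hk2]
    exact Or.inr (Or.inr (Or.inl ⟨by omega, by omega⟩))
  have key : ∀ x : Fin (2 * n), (Ak n hn k).Reachable x N := by
    intro x
    by_cases hx : x.val = n - 1
    · rw [show x = N from Fin.ext (by omega)]
    · by_cases hx2 : x.val + k < n ∨ x.val = n ∨ (n < x.val ∧ x.val < n + k)
      · refine ((ak_adj_iff n hn k hk1 hk2 x N).mpr ?_).reachable
        unfold Qp
        rcases hx2 with h | h | h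
        · exact Or.inl (Or.inl ⟨by omega, by omega⟩)
        · exact Or.inr (Or.inr (Or.inl ⟨by omega, by omega⟩))
        · exact Or.inr (Or.inr (Or.inr (Or.inl ⟨by omega, by omega, by omega⟩)))
      · push_neg at hx2
        have hxM : (Ak n hn k).Adj x M := by
          rw [ak_adj_iff n hn k hk1 hk2]
          unfold Qp
          by_cases hc : x.val < n
          · exact Or.inl (Or.inr (Or.inr (Or.inr (Or.inl ⟨by omega, by omega, by omega⟩))))
          · exact Or.inr (Or.inr (Or.inr (Or.inr (Or.inr ⟨by omega, by omega⟩))))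
        exact hxM.reachable.trans hMN.reachable
  have : Nonempty (Fin (2 * n)) := ⟨N⟩
  exact Connected.mk fun u v => (key u).trans (key v).symm

lemma ak_acyclic (n : ℕ) (hn : 0 < n) (k : ℕ) (hk1 : 1 ≤ k) (hk2 : k ≤ n) :
    (Ak n hn k).IsAcyclic := by
  intro v c hc
  have h3 := hc.three_le_length
  have hnd := (SimpleGraph.Walk.isCycle_def c).mp hc |>.2.2
  obtain ⟨x, hxs, hx1, hx2⟩ : ∃ x ∈ c.support, x.val ≠ n - 1 ∧ x.val ≠ n := by
    by_contra hcon
    push_neg at hcon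
    have hsub : c.support.tail.toFinset ⊆
        ({⟨n - 1, by omega⟩, ⟨n, by omega⟩} : Finset (Fin (2 * n))) := by
      intro a ha
      rw [List.mem_toFinset] at ha
      have ham := hcon a (List.mem_of_mem_tail ha)
      simp only [Finset.mem_insert, Finset.mem_singleton]
      by_cases h : a.val = n - 1
      · exact Or.inl (Fin.ext h)
      · exact Or.inr (Fin.ext (ham h))
    have hcard := Finset.card_le_card hsub
    rw [List.toFinset_card_of_nodup hnd, List.length_tail,
      SimpleGraph.Walk.length_support] at hcard
    have : ({⟨n - 1, by omega⟩, ⟨n, by omega⟩} : Finset (Fin (2 * n))).card ≤ 2 :=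
      (Finset.card_insert_le _ _).trans (by simp)
    omega
  have hc' := hc.rotate hxs
  revert hc'
  generalize c.rotate x hxs = c'
  intro hc'
  cases c' with
  | nil => exact SimpleGraph.Walk.IsCycle.not_of_nil hc'
  | @cons _ y _ h p =>
    rw [SimpleGraph.Walk.cons_isCycle_iff] at hc'
    obtain ⟨hp, hne⟩ := hc'
    have hrn : ¬p.reverse.Nil := SimpleGraph.Walk.not_nil_of_ne h.ne
    obtain ⟨z, hadj, q, hq⟩ := SimpleGraph.Walk.not_nil_iff.mp hrn
    have hmem : s(x, z) ∈ p.edges := by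
      have : s(x, z) ∈ p.reverse.edges := by rw [hq]; exact List.mem_cons_self
      rwa [SimpleGraph.Walk.edges_reverse, List.mem_reverse] at this
    have hzy : z = y := ak_unique_nbr n hn k hk1 hk2 x z y hx1 hx2 hadj h
    subst hzy
    exact hne hmem

/-- For `1 ≤ k ≤ n`, the double star `A_k` is a plane spanning tree of `T_{2n}`. -/
theorem Ak_is_plane_spanning_tree (n : ℕ) (hn : 0 < n) (k : ℕ)
    (hk1 : 1 ≤ k) (hk2 : k ≤ n) :
    (Ak n hn k).IsTree ∧ IsPlane (Ak n hn k) :=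
  ⟨⟨ak_connected n hn k hk1 hk2, ak_acyclic n hn k hk1 hk2⟩, ak_plane n hn k hk1 hk2⟩
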